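/- arXiv:2309.05328 — 2 statements merged into one kernel-verified Lean document; each statement's English description precedes it below -/
import Mathlib

section
/- For every real number p ≥ 2 and all vectors a, b in a real inner product space E, one has ⟨‖a‖^{p−2}a − ‖b‖^{p−2}b, a − b⟩ ≥ 2^{2−p}·‖a − b‖^p. (This is the monotonicity inequality for the p-Laplacian vector field v ↦ ‖v‖^{p−2}v used in the uniqueness part of the flow; the constant 2^{2−p} is the standard one, with equality when b = −a.) -/
open scoped RealInnerProductSpace
open Real Set

private lemma sq_rpow_half {x : ℝ} (p : ℝ) (hx : 0 ≤ x) : (x ^ 2) ^ (p / 2) = x ^ p := by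
  rw [← Real.rpow_natCast x 2, ← Real.rpow_mul hx]
  congr 1
  push_cast
  ring

private lemma rpow_sub_one_mul {x p : ℝ} (hx : 0 ≤ x) (hp : 2 ≤ p) :
    x ^ (p - 2) * x = x ^ (p - 1) := by
  rcases eq_or_lt_of_le hx with h | h
  · rw [← h, Real.zero_rpow (by linarith : p - 1 ≠ 0), mul_zero]
  · rw [show p - 1 = (p - 2) + 1 by ring, Real.rpow_add h, Real.rpow_one]

private lemma rpow_superadd {u v q : ℝ} (hu : 0 ≤ u) (hv : 0 ≤ v) (hq : 1 ≤ q) :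
    u ^ q + v ^ q ≤ (u + v) ^ q := by
  lift u to NNReal using hu
  lift v to NNReal using hv
  have := NNReal.add_rpow_le_rpow_add u v hq
  exact_mod_cast this

private lemma endpoint1 {p : ℝ} (hp : 2 ≤ p) :
    ∀ x y : ℝ, 0 ≤ x → 0 ≤ y →
    (2:ℝ) ^ (2 - p) * ((x - y) ^ 2) ^ (p / 2) ≤ (x - y) * (x ^ (p - 1) - y ^ (p - 1)) := by
  have main : ∀ x y : ℝ, 0 ≤ y → y ≤ x →
      (2:ℝ) ^ (2 - p) * ((x - y) ^ 2) ^ (p / 2) ≤ (x - y) * (x ^ (p - 1) - y ^ (p - 1)) := by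
    intro x y hy hxy
    have hd : 0 ≤ x - y := sub_nonneg.2 hxy
    have h1 : (x - y) ^ (p - 1) + y ^ (p - 1) ≤ x ^ (p - 1) := by
      have := rpow_superadd hd hy (by linarith : (1:ℝ) ≤ p - 1)
      rwa [sub_add_cancel] at this
    have h2 : (2:ℝ) ^ (2 - p) ≤ 1 :=
      Real.rpow_le_one_of_one_le_of_nonpos one_le_two (by linarith)
    have hsq : ((x - y) ^ 2) ^ (p / 2) = (x - y) ^ p := sq_rpow_half p hd
    rw [hsq]
    have hsplit : (x - y) ^ p = (x - y) * (x - y) ^ (p - 1) := by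
      have h := Real.rpow_add' hd (show (1:ℝ) + (p - 1) ≠ 0 by linarith)
      rw [show (1:ℝ) + (p - 1) = p by ring, Real.rpow_one] at h
      exact h
    calc (2:ℝ) ^ (2 - p) * (x - y) ^ p ≤ 1 * (x - y) ^ p := by
          exact mul_le_mul_of_nonneg_right h2 (Real.rpow_nonneg hd p)
      _ = (x - y) * (x - y) ^ (p - 1) := by rw [one_mul, hsplit]
      _ ≤ (x - y) * (x ^ (p - 1) - y ^ (p - 1)) :=
          mul_le_mul_of_nonneg_left (by linarith) hd
  intro x y hx hy
  rcases le_total y x with h | h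
  · exact main x y hy h
  · have := main y x hx h
    have e1 : ((x - y) ^ 2 : ℝ) = (y - x) ^ 2 := by ring
    have e2 : (y - x) * (y ^ (p - 1) - x ^ (p - 1)) =
        (x - y) * (x ^ (p - 1) - y ^ (p - 1)) := by ring
    rw [e1]
    linarith [this, e2.symm.le]

private lemma endpoint2 {p x y : ℝ} (hp : 2 ≤ p) (hx : 0 ≤ x) (hy : 0 ≤ y) :
    (2:ℝ) ^ (2 - p) * ((x + y) ^ 2) ^ (p / 2) ≤ (x + y) * (x ^ (p - 1) + y ^ (p - 1)) := by
  have hs : 0 ≤ x + y := by linarith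
  have hsq : ((x + y) ^ 2) ^ (p / 2) = (x + y) ^ p := sq_rpow_half p hs
  have hsplit : (x + y) ^ p = (x + y) * (x + y) ^ (p - 1) := by
    have h := Real.rpow_add' hs (show (1:ℝ) + (p - 1) ≠ 0 by linarith)
    rw [show (1:ℝ) + (p - 1) = p by ring, Real.rpow_one] at h
    exact h
  -- convexity of z ↦ z^(p-1) at midpoint
  have hcv := convexOn_rpow (show (1:ℝ) ≤ p - 1 by linarith)
  have hmid := hcv.2 (mem_Ici.2 hx) (mem_Ici.2 hy)
      (by norm_num : (0:ℝ) ≤ 1/2) (by norm_num : (0:ℝ) ≤ 1/2) (by norm_num)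
  simp only [smul_eq_mul] at hmid
  -- hmid : (1/2*x + 1/2*y)^(p-1) ≤ 1/2*x^(p-1) + 1/2*y^(p-1)
  have hpow2 : (x + y) ^ (p - 1) = 2 ^ (p - 1) * (1/2*x + 1/2*y) ^ (p - 1) := by
    rw [← Real.mul_rpow (by norm_num) (by linarith)]
    ring_nf
  have h2e : (2:ℝ) ^ (2 - p) * 2 ^ (p - 1) = 2 := by
    rw [← Real.rpow_add (by norm_num : (0:ℝ) < 2)]
    norm_num
  have key : (2:ℝ) ^ (2 - p) * (x + y) ^ (p - 1) ≤ x ^ (p - 1) + y ^ (p - 1) := by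
    calc (2:ℝ) ^ (2 - p) * (x + y) ^ (p - 1)
        = 2 * (1/2*x + 1/2*y) ^ (p - 1) := by rw [hpow2, ← mul_assoc, h2e]
      _ ≤ 2 * (1/2 * x ^ (p - 1) + 1/2 * y ^ (p - 1)) := by linarith
      _ = x ^ (p - 1) + y ^ (p - 1) := by ring
  rw [hsq, hsplit]
  calc (2:ℝ) ^ (2 - p) * ((x + y) * (x + y) ^ (p - 1))
      = (x + y) * ((2:ℝ) ^ (2 - p) * (x + y) ^ (p - 1)) := by ring
    _ ≤ (x + y) * (x ^ (p - 1) + y ^ (p - 1)) := mul_le_mul_of_nonneg_left key hs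

private lemma key_scalar {p x y t : ℝ} (hp : 2 ≤ p) (hx : 0 ≤ x) (hy : 0 ≤ y)
    (ht : |t| ≤ x * y) :
    (2:ℝ) ^ (2 - p) * (x ^ 2 + y ^ 2 - 2 * t) ^ (p / 2) ≤
      x ^ (p - 2) * x ^ 2 + y ^ (p - 2) * y ^ 2 - (x ^ (p - 2) + y ^ (p - 2)) * t := by
  have hX : x ^ (p - 2) * x = x ^ (p - 1) := rpow_sub_one_mul hx hp
  have hY : y ^ (p - 2) * y = y ^ (p - 1) := rpow_sub_one_mul hy hp
  rcases eq_or_lt_of_le (mul_nonneg hx hy) with h0 | hpos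
  · -- x*y = 0, hence t = 0
    have ht0 : t = 0 := abs_eq_zero.1 (le_antisymm (by rw [← h0] at ht; exact ht) (abs_nonneg t))
    subst ht0
    rcases mul_eq_zero.1 h0.symm with h | h
    · subst h
      have := endpoint1 hp 0 y (le_refl 0) hy
      simp only [Real.zero_rpow (by linarith : p - 1 ≠ 0)] at this
      have e : ((0 - y) ^ 2 : ℝ) = y ^ 2 := by ring
      rw [e] at this
      have e2 : (0 - y) * ((0:ℝ) - y ^ (p - 1)) = y ^ (p - 1) * y := by ring
      rw [e2, ← hY] at this
      norm_num
      ring_nf at this ⊢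
      linarith
    · subst h
      have := endpoint1 hp x 0 hx (le_refl 0)
      simp only [Real.zero_rpow (by linarith : p - 1 ≠ 0)] at this
      have e : ((x - 0) ^ 2 : ℝ) = x ^ 2 := by ring
      rw [e] at this
      have e2 : (x - 0) * (x ^ (p - 1) - (0:ℝ)) = x ^ (p - 1) * x := by ring
      rw [e2, ← hX] at this
      norm_num
      ring_nf at this ⊢
      linarith
  · -- x*y > 0
    set lam : ℝ := (x * y - t) / (2 * (x * y)) with hlamdef
    have h2xy : (0:ℝ) < 2 * (x * y) := by linarith
    have habs := abs_le.1 ht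
    have hlam0 : 0 ≤ lam := div_nonneg (by linarith [habs.2]) h2xy.le
    have hlam1 : lam ≤ 1 := by
      rw [div_le_one h2xy]
      linarith [habs.1]
    have hlameq : lam * (2 * (x * y)) = x * y - t := div_mul_cancel₀ _ h2xy.ne'
    have hcv := convexOn_rpow (show (1:ℝ) ≤ p / 2 by linarith)
    have hcomb := hcv.2 (mem_Ici.2 (sq_nonneg (x - y))) (mem_Ici.2 (sq_nonneg (x + y)))
        (by linarith : (0:ℝ) ≤ 1 - lam) hlam0 (by ring)
    simp only [smul_eq_mul] at hcomb
    have hu : (1 - lam) * (x - y) ^ 2 + lam * (x + y) ^ 2 = x ^ 2 + y ^ 2 - 2 * t := by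
      have : lam * (4 * (x * y)) = 2 * (x * y - t) := by
        rw [show lam * (4 * (x*y)) = 2 * (lam * (2 * (x*y))) by ring, hlameq]
      linarith [this]  -- might need nlinarith; fallback below
    have e1 := endpoint1 hp x y hx hy
    have e2 := endpoint2 hp hx hy
    have c2 : (0:ℝ) ≤ (2:ℝ) ^ (2 - p) := Real.rpow_nonneg (by norm_num) _
    calc (2:ℝ) ^ (2 - p) * (x ^ 2 + y ^ 2 - 2 * t) ^ (p / 2)
        = (2:ℝ) ^ (2 - p) * ((1 - lam) * (x - y) ^ 2 + lam * (x + y) ^ 2) ^ (p / 2) := by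
          rw [hu]
      _ ≤ (2:ℝ) ^ (2 - p) *
          ((1 - lam) * ((x - y) ^ 2) ^ (p / 2) + lam * ((x + y) ^ 2) ^ (p / 2)) := by
          exact mul_le_mul_of_nonneg_left hcomb c2
      _ = (1 - lam) * ((2:ℝ) ^ (2 - p) * ((x - y) ^ 2) ^ (p / 2)) +
          lam * ((2:ℝ) ^ (2 - p) * ((x + y) ^ 2) ^ (p / 2)) := by ring
      _ ≤ (1 - lam) * ((x - y) * (x ^ (p - 1) - y ^ (p - 1))) +
          lam * ((x + y) * (x ^ (p - 1) + y ^ (p - 1))) := by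
          exact add_le_add (mul_le_mul_of_nonneg_left e1 (by linarith))
            (mul_le_mul_of_nonneg_left e2 hlam0)
      _ = x ^ (p - 2) * x ^ 2 + y ^ (p - 2) * y ^ 2 - (x ^ (p - 2) + y ^ (p - 2)) * t := by
          rw [← hX, ← hY]
          linear_combination (x ^ (p - 2) + y ^ (p - 2)) * hlameq

/-- Monotonicity inequality for the p-Laplacian vector field `v ↦ ‖v‖^(p-2) • v`
(p ≥ 2), with the standard constant `2^(2-p)`. -/
theorem pLaplacian_monotonicity {E : Type*} [NormedAddCommGroup E] [InnerProductSpace ℝ E]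
    (p : ℝ) (hp : 2 ≤ p) (a b : E) :
    (2 : ℝ) ^ (2 - p) * ‖a - b‖ ^ p ≤
      ⟪(‖a‖ ^ (p - 2)) • a - (‖b‖ ^ (p - 2)) • b, a - b⟫ := by
  have hexp : ⟪(‖a‖ ^ (p - 2)) • a - (‖b‖ ^ (p - 2)) • b, a - b⟫ =
      ‖a‖ ^ (p - 2) * ‖a‖ ^ 2 + ‖b‖ ^ (p - 2) * ‖b‖ ^ 2 -
        (‖a‖ ^ (p - 2) + ‖b‖ ^ (p - 2)) * ⟪a, b⟫ := by
    simp only [inner_sub_left, inner_sub_right, real_inner_smul_left,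
      real_inner_self_eq_norm_sq, real_inner_comm b a]
    ring
  have hnorm : ‖a - b‖ ^ p = (‖a‖ ^ 2 + ‖b‖ ^ 2 - 2 * ⟪a, b⟫) ^ (p / 2) := by
    have h2 : (‖a - b‖ ^ 2 : ℝ) = ‖a‖ ^ 2 + ‖b‖ ^ 2 - 2 * ⟪a, b⟫ := by
      rw [norm_sub_sq_real]; ring
    rw [← sq_rpow_half p (norm_nonneg (a - b)), h2]
  rw [hexp, hnorm]
  exact key_scalar hp (norm_nonneg a) (norm_nonneg b) (abs_real_inner_le_norm a b)
end

section
/- Let ρ, r, r₁ be real numbers with 0 ≤ ρ ≤ r, 0 < r, and r < r₁ < π/2. Then (cos ρ − cos r₁)·sin²r ≥ (cos r − cos r₁)·sin²ρ. Consequently, setting δ = (cos r − cos r₁)·cos r₁ / sin²r, the function f(ρ) = cos ρ − cos r₁ satisfies cos r₁ · (cos ρ − cos r₁) ≥ δ · sin²ρ for every ρ ∈ [0, r]. -/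
open Real

/-- The scalar inequality verifying that geodesic balls in the sphere are
δ-generalised regular balls (Example 2): for `0 ≤ ρ ≤ r < r₁ < π/2`,
`(cos ρ − cos r₁)·sin²r ≥ (cos r − cos r₁)·sin²ρ`, and consequently, with
`δ = (cos r − cos r₁)·cos r₁ / sin²r`, one has
`cos r₁ · (cos ρ − cos r₁) ≥ δ · sin²ρ`. -/
theorem sphere_regular_ball_inequality (ρ r r₁ : ℝ)
    (hρ0 : 0 ≤ ρ) (hρr : ρ ≤ r) (hr : 0 < r) (hrr₁ : r < r₁) (hr₁ : r₁ < π / 2) :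
    (Real.cos r - Real.cos r₁) * Real.sin ρ ^ 2 ≤
      (Real.cos ρ - Real.cos r₁) * Real.sin r ^ 2 ∧
    ((Real.cos r - Real.cos r₁) * Real.cos r₁ / Real.sin r ^ 2) * Real.sin ρ ^ 2 ≤
      Real.cos r₁ * (Real.cos ρ - Real.cos r₁) := by
  have hπ : r₁ ≤ π := le_trans hr₁.le (by linarith [Real.pi_pos])
  have hba : Real.cos r ≤ Real.cos ρ :=
    Real.cos_le_cos_of_nonneg_of_le_pi hρ0 (le_trans hrr₁.le hπ) hρr
  have hcb : Real.cos r₁ < Real.cos r := by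
    apply Real.cos_lt_cos_of_nonneg_of_le_pi hr.le hπ hrr₁
  have hc : 0 < Real.cos r₁ := Real.cos_pos_of_mem_Ioo ⟨by linarith [Real.pi_pos], hr₁⟩
  have ha1 : Real.cos ρ ≤ 1 := Real.cos_le_one ρ
  have hsr : 0 < Real.sin r := Real.sin_pos_of_pos_of_lt_pi hr (lt_of_lt_of_le hrr₁ hπ)
  have hsρ : Real.sin ρ ^ 2 = 1 - Real.cos ρ ^ 2 := Real.sin_sq ρ
  have hsr2 : Real.sin r ^ 2 = 1 - Real.cos r ^ 2 := Real.sin_sq r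
  have h1 : (Real.cos r - Real.cos r₁) * Real.sin ρ ^ 2 ≤
      (Real.cos ρ - Real.cos r₁) * Real.sin r ^ 2 := by
    rw [hsρ, hsr2]
    nlinarith [mul_nonneg (sub_nonneg.2 hba) hc.le,
      mul_nonneg (sub_nonneg.2 hba) (sub_nonneg.2 ha1)]
  refine ⟨h1, ?_⟩
  rw [div_mul_eq_mul_div, div_le_iff₀ (by positivity : (0:ℝ) < Real.sin r ^ 2)]
  calc (Real.cos r - Real.cos r₁) * Real.cos r₁ * Real.sin ρ ^ 2
      = Real.cos r₁ * ((Real.cos r - Real.cos r₁) * Real.sin ρ ^ 2) := by ring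
    _ ≤ Real.cos r₁ * ((Real.cos ρ - Real.cos r₁) * Real.sin r ^ 2) :=
        mul_le_mul_of_nonneg_left h1 hc.le
    _ = Real.cos r₁ * (Real.cos ρ - Real.cos r₁) * Real.sin r ^ 2 := by ring
end
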